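/- arXiv:2005.11553 — 5 statements merged into one kernel-verified Lean document; each statement's English description precedes it below -/
import Mathlib

section
/- If G is extremely primitive of rank r, then there exist non-negative integers a₁,…,a_k with a₁+⋯+a_k = r−1 and a₁n₁+⋯+a_kn_k = |Ω|−1. Consequently, if no such k-tuple of non-negative integers exists, then G is not extremely primitive. -/
/-- Let `G` act faithfully and transitively on a finite set `Ω` with nontrivial point
stabilizer `H = G_α` acting faithfully on each of its orbits in `Ω \ {α}` (i.e. the
normal core of each stabilizer `H_β`, `β ≠ α`, is trivial).  Let `M 1, …, M k` be
representatives of the `H`-classes of core-free maximal subgroups of `H`, with indices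
`n i = |H : M i|`, and let `r` be the rank of `G` (the number of `H`-orbits on `Ω`).
If `G` is extremely primitive, then there are non-negative integers `a i` with
`∑ a i = r - 1` and `∑ a i * n i = |Ω| - 1`. -/
theorem stmt_1 {G Ω : Type*} [Group G] [Fintype G] [MulAction G Ω] [Fintype Ω]
    (hfaith : ∀ g : G, (∀ ω : Ω, g • ω = ω) → g = 1)
    (htrans : MulAction.IsPretransitive G Ω)
    (α : Ω) (H : Subgroup G) (hH : H = MulAction.stabilizer G α) (hne : H ≠ ⊥)
    (horbfaith : ∀ β : Ω, β ≠ α → (MulAction.stabilizer H β).normalCore = ⊥)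
    (k : ℕ) (M : Fin k → Subgroup H)
    (hM : ∀ i, IsCoatom (M i) ∧ (M i).normalCore = ⊥)
    (hrep : ∀ N : Subgroup H, IsCoatom N → N.normalCore = ⊥ →
      ∃ (i : Fin k) (h : H), N = (M i).map (MulAut.conj h).toMonoidHom)
    (n : Fin k → ℕ) (hn : ∀ i, n i = (M i).index)
    (r : ℕ) (hr : r = Nat.card (Quotient (MulAction.orbitRel H Ω)))
    (hEP : ∀ β : Ω, β ≠ α → IsCoatom (MulAction.stabilizer H β)) :
    ∃ a : Fin k → ℕ, (∑ i, a i) = r - 1 ∧ (∑ i, a i * n i) = Fintype.card Ω - 1 := by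
  classical
  set Q := MulAction.orbitRel.Quotient H Ω with hQ
  set ω₀ : Q := Quotient.mk'' α with hω₀
  -- orbit of α under H is {α}
  have horb_α : MulAction.orbit H α = {α} := by
    apply Set.eq_singleton_iff_unique_mem.mpr
    refine ⟨MulAction.mem_orbit_self α, ?_⟩
    rintro x ⟨h, rfl⟩
    have : (h : G) ∈ MulAction.stabilizer G α := hH ▸ h.2
    exact MulAction.mem_stabilizer_iff.mp this
  have hout : ∀ q : Q, q ≠ ω₀ → Quotient.out q ≠ α := by
    intro q hq hc
    exact hq (by rw [hω₀, ← hc]; exact (Quotient.out_eq q).symm)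
  -- index formula for each nontrivial orbit
  have key : ∀ q : Q, q ≠ ω₀ →
      ∃ i : Fin k, (MulAction.stabilizer H (Quotient.out q)).index = n i := by
    intro q hq
    obtain ⟨i, h, hi⟩ := hrep _ (hEP _ (hout q hq)) (horbfaith _ (hout q hq))
    refine ⟨i, ?_⟩
    rw [hi, Subgroup.index_map_of_injective _ (MulAut.conj h).injective,
      MonoidHom.range_eq_top.mpr (MulAut.conj h).surjective, Subgroup.index_top, mul_one,
      hn i]
  -- the set of nontrivial orbits
  have hω₀mem : ω₀ ∈ (Finset.univ : Finset Q) := Finset.mem_univ _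
  set s : Finset Q := Finset.univ.erase ω₀ with hs
  -- choice of index for each nontrivial orbit
  choose idx idx_spec using fun q : {q : Q // q ∈ s} => key q.1 (Finset.ne_of_mem_erase q.2)
  refine ⟨fun i => ∑ q ∈ s.attach, if idx q = i then 1 else 0, ?_, ?_⟩
  · rw [Finset.sum_comm]
    have : ∀ q ∈ s.attach, (∑ i : Fin k, if idx q = i then 1 else 0) = 1 := by
      intro q _
      simp
    rw [Finset.sum_congr rfl this]
    simp only [Finset.sum_const, smul_eq_mul, mul_one, Finset.card_attach]
    rw [hs, Finset.card_erase_of_mem hω₀mem, hr]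
    rw [Nat.card_eq_fintype_card]
    rfl
  · -- class equation
    have hcard : Fintype.card Ω = ∑ q : Q, (MulAction.stabilizer H (Quotient.out q)).index := by
      have e := MulAction.selfEquivSigmaOrbits H Ω
      rw [Fintype.card_congr e]
      rw [Fintype.card_sigma]
      congr 1
      ext q
      rw [MulAction.index_stabilizer, Set.ncard_eq_toFinset_card', Set.toFinset_card]
    have hstab0 : (MulAction.stabilizer H (Quotient.out ω₀)).index = 1 := by
      have h1 : Quotient.out ω₀ = α := by
        have : Quotient.out ω₀ ∈ MulAction.orbit H α := by
          have := Quotient.out_eq ω₀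
          rw [hω₀] at this ⊢
          exact Quotient.exact' this
        rwa [horb_α] at this
      rw [h1]
      have : MulAction.stabilizer H α = ⊤ := by
        ext h
        simp only [Subgroup.mem_top, iff_true, MulAction.mem_stabilizer_iff]
        have : (h : G) ∈ MulAction.stabilizer G α := hH ▸ h.2
        exact MulAction.mem_stabilizer_iff.mp this
      rw [this, Subgroup.index_top]
    have hsplit : Fintype.card Ω =
        1 + ∑ q ∈ s, (MulAction.stabilizer H (Quotient.out q)).index := by
      rw [hcard, ← Finset.add_sum_erase _ _ hω₀mem, hstab0]
    have : (∑ i : Fin k, (∑ q ∈ s.attach, if idx q = i then 1 else 0) * n i)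
        = ∑ q ∈ s, (MulAction.stabilizer H (Quotient.out q)).index := by
      simp_rw [Finset.sum_mul, ite_mul, one_mul, zero_mul]
      rw [Finset.sum_comm]
      rw [← Finset.sum_attach s fun q => (MulAction.stabilizer H (Quotient.out q)).index]
      refine Finset.sum_congr rfl fun q _ => ?_
      rw [idx_spec q]
      simp
    rw [this, hsplit]
    omega
end

section
/- Under hypotheses (i), (ii), (iii), the subgroup H ∩ gHg⁻¹ is a proper, non-maximal subgroup of H. -/
section aux
variable {G : Type*} [Group G]

lemma my_mem_conj_map (S : Subgroup G) (g x : G) :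
    x ∈ S.map (MulAut.conj g).toMonoidHom ↔ g⁻¹ * x * g ∈ S := by
  constructor
  · rintro ⟨y, hy, rfl⟩
    simpa [MulAut.conj, mul_assoc] using hy
  · intro h
    exact ⟨g⁻¹ * x * g, h, by simp [MulAut.conj]; group⟩

lemma my_map_map_conj (S : Subgroup G) (g : G) :
    (S.map (MulAut.conj g⁻¹).toMonoidHom).map (MulAut.conj g).toMonoidHom = S := by
  ext x
  simp [my_mem_conj_map, mul_assoc]

lemma my_map_map_conj' (S : Subgroup G) (g : G) :
    (S.map (MulAut.conj g).toMonoidHom).map (MulAut.conj g⁻¹).toMonoidHom = S := by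
  simpa using my_map_map_conj S g⁻¹

lemma my_card_map_conj [Finite G] (S : Subgroup G) (g : G) :
    Nat.card (S.map (MulAut.conj g).toMonoidHom) = Nat.card S :=
  (Nat.card_congr (S.equivMapOfInjective _ (MulAut.conj g).injective).toEquiv).symm

lemma my_le_map_conj_eq [Finite G] (S : Subgroup G) (g : G)
    (h : S ≤ S.map (MulAut.conj g).toMonoidHom) : S.map (MulAut.conj g).toMonoidHom = S :=
  (Subgroup.eq_of_le_of_card_ge h (my_card_map_conj S g).le).symm

lemma my_conj_mem_of_stable {M : Subgroup G} {h : G}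
    (hst : M.map (MulAut.conj h).toMonoidHom = M) {m : G} (hm : m ∈ M) :
    h * m * h⁻¹ ∈ M := by
  rw [← hst, my_mem_conj_map]
  simpa [mul_assoc] using hm

end aux

/-- Let `G` be a finite group, `G₀ ⊴ G`, `H ≤ G`, `H₀ = H ⊓ G₀`, and let `K < H₀`
be a proper subgroup normalized by `H`.  Let `𝓜` be the (nonempty) set of maximal
subgroups of `H₀` containing `K`.  Assume (i) `H₀` is maximal in `G₀`; (ii) every
`M ∈ 𝓜` is normalized by `H`; (iii) there is `g ∈ G₀` with `g⁻¹Kg = K` and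
`g⁻¹Mg ⊄ H₀` for all `M ∈ 𝓜`.  Then `H ∩ gHg⁻¹` is a proper non-maximal subgroup
of `H`. -/
theorem stmt_2 {G : Type*} [Group G] [Finite G]
    (G₀ H : Subgroup G) [G₀.Normal]
    (H₀ : Subgroup G) (hH₀ : H₀ = H ⊓ G₀)
    (K : Subgroup G) (hKlt : K < H₀)
    (hKnorm : ∀ h ∈ H, K.map (MulAut.conj h).toMonoidHom = K)
    (𝓜 : Set (Subgroup G))
    (h𝓜 : 𝓜 = {M | K ≤ M ∧ M < H₀ ∧ ∀ L : Subgroup G, M < L → L ≤ H₀ → L = H₀})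
    (h𝓜ne : 𝓜.Nonempty)
    (hmax : H₀ < G₀ ∧ ∀ L : Subgroup G, H₀ < L → L ≤ G₀ → L = G₀)
    (hMstable : ∀ M ∈ 𝓜, ∀ h ∈ H, M.map (MulAut.conj h).toMonoidHom = M)
    (g : G) (hg : g ∈ G₀)
    (hgK : K.map (MulAut.conj g⁻¹).toMonoidHom = K)
    (hgM : ∀ M ∈ 𝓜, ¬ (M.map (MulAut.conj g⁻¹).toMonoidHom ≤ H₀)) :
    H ⊓ H.map (MulAut.conj g).toMonoidHom < H ∧
      ∃ L : Subgroup G, H ⊓ H.map (MulAut.conj g).toMonoidHom < L ∧ L < H := by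
  set c : G →* G := (MulAut.conj g).toMonoidHom with hc
  set c' : G →* G := (MulAut.conj g⁻¹).toMonoidHom with hc'
  have hH₀H : H₀ ≤ H := hH₀ ▸ inf_le_left
  have hH₀G₀ : H₀ ≤ G₀ := hH₀ ▸ inf_le_right
  -- H₀.map c = H.map c ⊓ G₀
  have hF3 : H₀.map c = H.map c ⊓ G₀ := by
    ext x
    simp only [Subgroup.mem_inf, my_mem_conj_map, hH₀, hc]
    constructor
    · rintro ⟨h1, h2⟩
      refine ⟨h1, ?_⟩
      have := Subgroup.Normal.conj_mem ‹G₀.Normal› _ h2 g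
      simpa [mul_assoc] using this
    · rintro ⟨h1, h2⟩
      exact ⟨h1, by simpa using Subgroup.Normal.conj_mem ‹G₀.Normal› _ h2 g⁻¹⟩
  -- key: H₀ is not contained in its conjugate
  have hknot : ¬ H₀ ≤ H₀.map c := by
    intro hle
    have heq : H₀.map c = H₀ := my_le_map_conj_eq H₀ g hle
    obtain ⟨M, hM⟩ := h𝓜ne
    apply hgM M hM
    have hMle : M ≤ H₀ := by
      rw [h𝓜] at hM; exact hM.2.1.le
    calc M.map c' ≤ (H₀.map c).map c' := Subgroup.map_mono (by rw [heq]; exact hMle)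
      _ = H₀ := my_map_map_conj' H₀ g
  -- K is stable under conjugation by g
  have hKc : K.map c = K := by
    calc K.map c = (K.map c').map c := by rw [hgK]
      _ = K := my_map_map_conj K g
  -- the intersection D
  set D : Subgroup G := H ⊓ H.map c with hD
  -- D ⊓ G₀ = H₀ ⊓ H₀.map c =: A
  set A : Subgroup G := H₀ ⊓ H₀.map c with hA
  have hDG₀ : D ⊓ G₀ = A := by
    rw [hD, hA, hF3, hH₀]
    ext x
    simp only [Subgroup.mem_inf]
    tauto
  have hKA : K ≤ A := le_inf hKlt.le (hKc ▸ Subgroup.map_mono hKlt.le)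
  have hAH₀ : A < H₀ := by
    rcases lt_or_eq_of_le (inf_le_left : A ≤ H₀) with h | h
    · exact h
    · exact absurd (le_trans h.ge inf_le_right) hknot
  -- find a maximal M ∈ 𝓜 containing A
  obtain ⟨M, hMs, hMmax⟩ := Set.Finite.exists_maximalFor (id : Subgroup G → Subgroup G)
    {M : Subgroup G | A ≤ M ∧ M < H₀} (Set.toFinite _) ⟨A, le_rfl, hAH₀⟩
  obtain ⟨hAM, hMH₀⟩ := hMs
  have hM𝓜 : M ∈ 𝓜 := by
    rw [h𝓜]
    refine ⟨hKA.trans hAM, hMH₀, fun L hML hLH₀ => ?_⟩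
    by_contra hne
    have hLlt : L < H₀ := lt_of_le_of_ne hLH₀ hne
    exact hML.not_ge (hMmax (j := L) ⟨hAM.trans hML.le, hLlt⟩ hML.le)
  -- M is not contained in H₀.map c
  have hMnmap : ¬ M ≤ H₀.map c := by
    intro hle
    apply hgM M hM𝓜
    calc M.map c' ≤ (H₀.map c).map c' := Subgroup.map_mono hle
      _ = H₀ := my_map_map_conj' H₀ g
  -- first conclusion : D < H
  have hDltH : D < H := by
    rcases lt_or_eq_of_le (inf_le_left : D ≤ H) with h | h
    · exact h
    · exfalso
      have hHle : H ≤ H.map c := le_trans h.ge inf_le_right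
      apply hknot
      intro x hx
      rw [hF3, Subgroup.mem_inf]
      rw [hH₀, Subgroup.mem_inf] at hx
      exact ⟨hHle hx.1, hx.2⟩
  refine ⟨hDltH, M ⊔ D, ?_, ?_⟩
  · -- D < M ⊔ D
    rcases lt_or_eq_of_le (le_sup_right : D ≤ M ⊔ D) with h | h
    · exact h
    · exfalso
      have hMD : M ≤ D := le_sup_left.trans h.ge
      apply hMnmap
      have : M ≤ D ⊓ G₀ := le_inf hMD (hMH₀.le.trans hH₀G₀)
      rw [hDG₀] at this
      exact this.trans inf_le_right
  · -- M ⊔ D < H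
    have hLH : M ⊔ D ≤ H := sup_le (hMH₀.le.trans hH₀H) inf_le_left
    rcases lt_or_eq_of_le hLH with h | h
    · exact h
    · exfalso
      -- product subgroup S = M * D
      have hstab : ∀ h ∈ H, M.map (MulAut.conj h).toMonoidHom = M := hMstable M hM𝓜
      set S : Subgroup G :=
        { carrier := {x | ∃ m ∈ M, ∃ d ∈ D, m * d = x}
          one_mem' := ⟨1, one_mem _, 1, one_mem _, mul_one 1⟩
          mul_mem' := by
            rintro a b ⟨m1, hm1, d1, hd1, rfl⟩ ⟨m2, hm2, d2, hd2, rfl⟩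
            have hd1H : d1 ∈ H := hd1.1
            refine ⟨m1 * (d1 * m2 * d1⁻¹),
              mul_mem hm1 (my_conj_mem_of_stable (hstab d1 hd1H) hm2),
              d1 * d2, mul_mem hd1 hd2, by group⟩
          inv_mem' := by
            rintro x ⟨m, hm, d, hd, rfl⟩
            have hdH : d⁻¹ ∈ H := inv_mem hd.1
            refine ⟨d⁻¹ * m⁻¹ * d, ?_, d⁻¹, inv_mem hd, by group⟩
            simpa using my_conj_mem_of_stable (hstab d⁻¹ hdH) (inv_mem hm) } with hS
      have hsupS : M ⊔ D ≤ S :=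
        sup_le (fun m hm => ⟨m, hm, 1, one_mem _, mul_one m⟩)
          (fun d hd => ⟨1, one_mem _, d, hd, one_mul d⟩)
      have hH₀M : H₀ ≤ M := by
        intro x hx
        have hxH : x ∈ H := hH₀H hx
        have hxG₀ : x ∈ G₀ := hH₀G₀ hx
        have hxS : x ∈ S := hsupS (h.symm ▸ hxH : x ∈ M ⊔ D)
        obtain ⟨m, hm, d, hd, rfl⟩ := hxS
        have hdG₀ : d ∈ G₀ := by
          have hmG₀ : m ∈ G₀ := hH₀G₀ (hMH₀.le hm)
          have : m⁻¹ * (m * d) ∈ G₀ := mul_mem (inv_mem hmG₀) hxG₀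
          simpa [mul_assoc] using this
        have hdA : d ∈ A := by
          rw [← hDG₀]
          exact ⟨hd, hdG₀⟩
        exact mul_mem hm (hAM hdA)
      exact (hMH₀ : M < H₀).not_ge hH₀M
end

section
/- If 𝒬(G,H) = Σᵢ |xᵢ^G| · (|xᵢ^G ∩ H| / |xᵢ^G|)² < 1, then there exists x ∈ G with H ∩ x⁻¹Hx = 1; equivalently, the base size b(G,H) of the action of G on G/H equals 2 (assuming H ≠ 1). -/
open Finset

/-- Let `G` be a finite group and `H` a proper nontrivial subgroup, and let
`x 1, …, x k` be representatives of the distinct `G`-conjugacy classes of prime order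
elements of `G` meeting `H`.  If `𝒬(G,H) = ∑ i |xᵢ^G| · (|xᵢ^G ∩ H|/|xᵢ^G|)² < 1`
then there exists `x ∈ G` with `H ∩ x⁻¹Hx = 1` (i.e. the base size of `G` acting on
`G/H` is `2`). -/
theorem stmt_4 {G : Type*} [Group G] [Fintype G] (H : Subgroup G)
    (hne : H ≠ ⊥) (hproper : H ≠ ⊤)
    (k : ℕ) (x : Fin k → G)
    (hord : ∀ i, (orderOf (x i)).Prime)
    (hmeet : ∀ i, ∃ h ∈ H, IsConj (x i) h)
    (hdist : ∀ i j, i ≠ j → ¬ IsConj (x i) (x j))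
    (hrep : ∀ g : G, (orderOf g).Prime → (∃ h ∈ H, IsConj g h) → ∃ i, IsConj g (x i))
    (hQ : ∑ i, (Nat.card ↥{y : G | IsConj (x i) y} : ℝ) *
        ((Nat.card ↥({y : G | IsConj (x i) y} ∩ (H : Set G)) : ℝ) /
          (Nat.card ↥{y : G | IsConj (x i) y} : ℝ)) ^ 2 < 1) :
    ∃ g : G, H ⊓ H.comap (MulAut.conj g).toMonoidHom = ⊥ := by
  classical
  by_contra hcon
  push_neg at hcon
  -- every g admits a prime-order z ∈ H with g z g⁻¹ ∈ H
  have hbad : ∀ g : G, ∃ z : G, (orderOf z).Prime ∧ z ∈ H ∧ g * z * g⁻¹ ∈ H := by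
    intro g
    set K := H ⊓ H.comap (MulAut.conj g).toMonoidHom with hK
    have h1 : 1 < Nat.card K := K.one_lt_card_iff_ne_bot.mpr (hcon g)
    have hp : (Nat.card K).minFac.Prime := Nat.minFac_prime (by omega)
    haveI : Fact (Nat.card K).minFac.Prime := ⟨hp⟩
    obtain ⟨z, hz⟩ := exists_prime_orderOf_dvd_card' (G := K) (Nat.card K).minFac
      (Nat.minFac_dvd _)
    refine ⟨(z : G), ?_, ?_, ?_⟩
    · rw [Subgroup.orderOf_coe, hz]; exact hp
    · exact (z.2.1 : (z : G) ∈ H)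
    · have := z.2.2
      simpa [Subgroup.mem_comap, MulAut.conj_apply] using this
  -- finset versions of the classes
  set C : Fin k → Finset G := fun i => univ.filter (fun y => IsConj (x i) y) with hC
  set HF : Finset G := univ.filter (· ∈ H) with hHF
  -- fiber cardinality lemma: for conjugates, conjugation-fibers all have card of centralizer
  have fiber : ∀ z w : G, IsConj z w →
      (univ.filter fun g : G => g * z * g⁻¹ = w).card =
      (univ.filter fun c : G => c * z = z * c).card := by
    intro z w hzw
    obtain ⟨g₀, hg₀⟩ := isConj_iff.mp hzw
    apply Finset.card_bij' (fun g _ => g₀⁻¹ * g) (fun c _ => g₀ * c)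
    · intro g hg
      simp only [mem_filter, mem_univ, true_and] at hg ⊢
      have : g * z * g⁻¹ = g₀ * z * g₀⁻¹ := by rw [hg, hg₀]
      have h2 : g * z = g₀ * z * g₀⁻¹ * g := by
        rw [← this]; group
      rw [mul_assoc, h2]; group
    · intro c hc
      simp only [mem_filter, mem_univ, true_and] at hc ⊢
      rw [← hg₀]
      calc g₀ * c * z * (g₀ * c)⁻¹ = g₀ * (c * z) * (c⁻¹ * g₀⁻¹) := by group
        _ = g₀ * (z * c) * (c⁻¹ * g₀⁻¹) := by rw [hc]
        _ = g₀ * z * g₀⁻¹ := by group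
    · intro g _; group
    · intro c _; group
  -- fibering over the conjugacy class
  have classEq : ∀ i, ∀ z ∈ C i,
      Fintype.card G = (C i).card * (univ.filter fun c : G => c * z = z * c).card := by
    intro i z hz
    simp only [hC, mem_filter, mem_univ, true_and] at hz
    have := Finset.card_eq_sum_card_fiberwise (s := (univ : Finset G)) (t := C i)
      (f := fun g : G => g * z * g⁻¹) ?_
    · rw [← Finset.card_univ, this]
      rw [Finset.sum_congr rfl fun w hw => ?_, Finset.sum_const, smul_eq_mul]
      simp only [hC, mem_filter, mem_univ, true_and] at hw
      exact fiber z w (hz.symm.trans hw)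
    · intro g _
      simp only [hC, Finset.mem_coe, mem_filter, mem_univ, true_and]
      exact hz.trans (isConj_iff.mpr ⟨g, rfl⟩)
  have interEq : ∀ i, ∀ z ∈ C i ∩ HF,
      (univ.filter fun g : G => g * z * g⁻¹ ∈ H).card =
      (C i ∩ HF).card * (univ.filter fun c : G => c * z = z * c).card := by
    intro i z hz
    simp only [hC, hHF, mem_inter, mem_filter, mem_univ, true_and] at hz
    have := Finset.card_eq_sum_card_fiberwise
      (s := univ.filter fun g : G => g * z * g⁻¹ ∈ H) (t := C i ∩ HF)
      (f := fun g : G => g * z * g⁻¹) ?_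
    · rw [this, Finset.sum_congr rfl fun w hw => ?_, Finset.sum_const, smul_eq_mul]
      simp only [hC, hHF, mem_inter, mem_filter, mem_univ, true_and] at hw
      rw [Finset.filter_filter]
      have : (univ.filter fun g : G => g * z * g⁻¹ ∈ H ∧ g * z * g⁻¹ = w) =
          (univ.filter fun g : G => g * z * g⁻¹ = w) := by
        apply Finset.filter_congr
        intro g _
        constructor
        · exact fun h => h.2
        · exact fun h => ⟨h ▸ hw.2, h⟩
      rw [this]
      exact fiber z w (hz.1.symm.trans hw.1)
    · intro g hg
      simp only [Finset.mem_coe, mem_filter, mem_univ, true_and] at hg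
      simp only [hC, hHF, Finset.mem_coe, mem_inter, mem_filter, mem_univ, true_and]
      exact ⟨hz.1.trans (isConj_iff.mpr ⟨g, rfl⟩), hg⟩
  -- main covering inequality
  have cover : (univ : Finset G) ⊆ (univ : Finset (Fin k)).biUnion (fun i =>
      (C i ∩ HF).biUnion (fun z => univ.filter fun g : G => g * z * g⁻¹ ∈ H)) := by
    intro g _
    obtain ⟨z, hzp, hzH, hzg⟩ := hbad g
    obtain ⟨i, hi⟩ := hrep z hzp ⟨z, hzH, IsConj.refl z⟩
    refine Finset.mem_biUnion.mpr ⟨i, mem_univ i, Finset.mem_biUnion.mpr ⟨z, ?_, ?_⟩⟩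
    · exact Finset.mem_inter.mpr ⟨Finset.mem_filter.mpr ⟨mem_univ z, hi.symm⟩,
        Finset.mem_filter.mpr ⟨mem_univ z, hzH⟩⟩
    · exact Finset.mem_filter.mpr ⟨mem_univ g, hzg⟩
  have main : Fintype.card G ≤ ∑ i : Fin k, ∑ z ∈ C i ∩ HF,
      (univ.filter fun g : G => g * z * g⁻¹ ∈ H).card := by
    calc Fintype.card G ≤ _ := Finset.card_le_card cover
      _ ≤ ∑ i : Fin k, ((C i ∩ HF).biUnion
            (fun z => univ.filter fun g : G => g * z * g⁻¹ ∈ H)).card :=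
          Finset.card_biUnion_le
      _ ≤ _ := Finset.sum_le_sum fun i _ => Finset.card_biUnion_le
  -- cardinality identifications for hQ
  have cardC : ∀ i, (Nat.card ↥{y : G | IsConj (x i) y}) = (C i).card := by
    intro i
    rw [Nat.card_coe_set_eq, Set.ncard_eq_toFinset_card']
    congr 1
    ext y
    simp [hC]
  have cardI : ∀ i, (Nat.card ↥({y : G | IsConj (x i) y} ∩ (H : Set G))) =
      (C i ∩ HF).card := by
    intro i
    rw [Nat.card_coe_set_eq, Set.ncard_eq_toFinset_card']
    congr 1
    ext y
    simp [hC, hHF]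
  have cpos : ∀ i, 0 < (C i).card := by
    intro i
    obtain ⟨h, hh, hch⟩ := hmeet i
    exact Finset.card_pos.mpr ⟨h, by simp only [hC, mem_filter, mem_univ, true_and]; exact hch⟩
  -- pass to ℝ
  have key : (Fintype.card G : ℝ) ≤
      (Fintype.card G : ℝ) * ∑ i, ((C i).card : ℝ) *
        (((C i ∩ HF).card : ℝ) / ((C i).card : ℝ)) ^ 2 := by
    have := main
    calc (Fintype.card G : ℝ) ≤ (∑ i : Fin k, ∑ z ∈ C i ∩ HF,
        (univ.filter fun g : G => g * z * g⁻¹ ∈ H).card : ℕ) := by exact_mod_cast main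
      _ = ∑ i : Fin k, ∑ z ∈ C i ∩ HF,
          ((univ.filter fun g : G => g * z * g⁻¹ ∈ H).card : ℝ) := by push_cast; ring
      _ = (Fintype.card G : ℝ) * ∑ i, ((C i).card : ℝ) *
          (((C i ∩ HF).card : ℝ) / ((C i).card : ℝ)) ^ 2 := by
        rw [Finset.mul_sum]
        refine Finset.sum_congr rfl fun i _ => ?_
        have hc0 : ((C i).card : ℝ) ≠ 0 := by exact_mod_cast (cpos i).ne'
        have hterm : ∀ z ∈ C i ∩ HF,
            ((univ.filter fun g : G => g * z * g⁻¹ ∈ H).card : ℝ) =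
            ((C i ∩ HF).card : ℝ) * (Fintype.card G : ℝ) / ((C i).card : ℝ) := by
          intro z hz
          have h1 := interEq i z hz
          have h2 := classEq i z (Finset.mem_inter.mp hz).1
          rw [eq_div_iff hc0]
          have e1 : ((univ.filter fun g : G => g * z * g⁻¹ ∈ H).card : ℝ) *
              ((C i).card : ℝ) = ((C i ∩ HF).card : ℝ) *
              (((univ.filter fun c : G => c * z = z * c).card : ℝ) * ((C i).card : ℝ)) := by
            rw_mod_cast [h1]; push_cast; ring
          rw [e1]
          congr 1
          rw [mul_comm]
          exact_mod_cast h2.symm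
        rw [Finset.sum_congr rfl hterm, Finset.sum_const, nsmul_eq_mul]
        field_simp
  have hGpos : (0 : ℝ) < Fintype.card G := by exact_mod_cast Fintype.card_pos
  have hQ' : ∑ i, ((C i).card : ℝ) *
      (((C i ∩ HF).card : ℝ) / ((C i).card : ℝ)) ^ 2 < 1 := by
    convert hQ using 2 with i
    rw [cardC i, cardI i]
  nlinarith [key, hQ', hGpos]
end

section
/- If g normalizes M (i.e., g⁻¹Mg = M), then g ∈ K. -/
/-- Let `G` be a group, `M ≤ G` with a normal subgroup `K ⊴ M` of index `2`, let
`x ∈ M`, and let `g ∈ G` have finite odd order with `x⁻¹gx = g⁻¹`.  If `g` normalizes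
`M` (i.e. `g⁻¹Mg = M`), then `g ∈ K`. -/
theorem stmt_15 {G : Type*} [Group G] (M K : Subgroup G) (hKM : K ≤ M)
    (hnorm : ∀ m ∈ M, ∀ k ∈ K, m * k * m⁻¹ ∈ K)
    (hindex : K.relIndex M = 2)
    (x : G) (hx : x ∈ M) (g : G)
    (hodd : Odd (orderOf g))
    (hconj : x⁻¹ * g * x = g⁻¹)
    (hgM : M.map (MulAut.conj g⁻¹).toMonoidHom = M) :
    g ∈ K := by
  -- g = x * g⁻¹ * x⁻¹
  have h1 : g = x * g⁻¹ * x⁻¹ := by rw [← hconj]; group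
  -- g x g⁻¹ ∈ M
  have hgxg : g * x * g⁻¹ ∈ M := by
    rw [← hgM] at hx
    rcases hx with ⟨y, hy, hy2⟩
    simp only [MulEquiv.toMonoidHom_eq_coe, MonoidHom.coe_coe, MulAut.conj_apply] at hy2
    have : y = g * x * g⁻¹ := by rw [← hy2]; group
    exact this ▸ hy
  -- g² ∈ M
  have hg2M : g ^ 2 ∈ M := by
    have heq : g ^ 2 = (g * x * g⁻¹) * x⁻¹ := by
      rw [pow_two]; nth_rewrite 2 [h1]; group
    rw [heq]; exact M.mul_mem hgxg (M.inv_mem hx)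
  obtain ⟨m, hm⟩ := hodd
  have hgpow : g = (g ^ 2) ^ (m + 1) := by
    rw [← pow_mul]
    have : 2 * (m + 1) = orderOf g + 1 := by omega
    rw [this, pow_succ, pow_orderOf_eq_one, one_mul]
  have hgMmem : g ∈ M := hgpow ▸ M.pow_mem hg2M (m + 1)
  -- K as a normal subgroup of M
  haveI : (K.subgroupOf M).Normal := by
    constructor
    intro k hk n
    exact hnorm n.1 n.2 k.1 hk
  have hg2K : g ^ 2 ∈ K := by
    have := Subgroup.sq_mem_of_index_two hindex (⟨g, hgMmem⟩ : M)
    simpa [Subgroup.mem_subgroupOf] using this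
  exact hgpow ▸ K.pow_mem hg2K (m + 1)
end

section
/- If g ∈ H and K ≤ g⁻¹Mg, then g ∈ M and hence g⁻¹Mg = M; in other words, M is the unique H-conjugate of M containing K. -/
lemma map_conj_map_conj {H : Type*} [Group H] (K : Subgroup H) (a b : H) :
    (K.map (MulAut.conj a).toMonoidHom).map (MulAut.conj b).toMonoidHom
      = K.map (MulAut.conj (b * a)).toMonoidHom := by
  rw [Subgroup.map_map]
  congr 1
  ext x
  simp [mul_assoc]

lemma mem_normalizer_of_map_conj_eq {H : Type*} [Group H] (K : Subgroup H) (x : H)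
    (h : K.map (MulAut.conj x).toMonoidHom = K) : x ∈ Subgroup.normalizer (K : Set H) := by
  rw [Subgroup.mem_normalizer_iff]
  intro n
  constructor
  · intro hn
    have : (MulAut.conj x).toMonoidHom n ∈ K.map (MulAut.conj x).toMonoidHom :=
      Subgroup.mem_map_of_mem _ hn
    rw [h] at this
    simpa using this
  · intro hn
    have : x * n * x⁻¹ ∈ K.map (MulAut.conj x).toMonoidHom := by rw [h]; exact hn
    obtain ⟨k, hk, hkeq⟩ := this
    simp only [MulEquiv.coe_toMonoidHom, MulAut.conj_apply] at hkeq
    have hkn : k = n := by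
      exact mul_left_cancel (mul_right_cancel hkeq)
    rwa [hkn] at hk

/-- Let `H` be a finite group, `M ≤ H` and `K ≤ M`.  Assume (a) `N_H(K) ≤ M`, and
(b) every `H`-conjugate of `K` lying in `M` is `M`-conjugate to `K`.  If `g ∈ H`
and `K ≤ g⁻¹Mg`, then `g ∈ M` and `g⁻¹Mg = M`; that is, `M` is the unique
`H`-conjugate of `M` containing `K`. -/
theorem stmt_16 {H : Type*} [Group H] [Finite H] (M K : Subgroup H) (hKM : K ≤ M)
    (ha : Subgroup.normalizer (K : Set H) ≤ M)
    (hb : ∀ h : H, K.map (MulAut.conj h⁻¹).toMonoidHom ≤ M →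
      ∃ m ∈ M,
        (K.map (MulAut.conj h⁻¹).toMonoidHom).map (MulAut.conj m⁻¹).toMonoidHom = K) :
    ∀ g : H, K ≤ M.map (MulAut.conj g⁻¹).toMonoidHom →
      g ∈ M ∧ M.map (MulAut.conj g⁻¹).toMonoidHom = M := by
  intro g hg
  obtain ⟨m, hmM, hmeq⟩ := hb g⁻¹ (by
    intro x hx
    obtain ⟨k, hk, rfl⟩ := hx
    obtain ⟨m', hm', hm'eq⟩ := hg hk
    simp only [MulEquiv.coe_toMonoidHom, MulAut.conj_apply, inv_inv] at *
    rw [← hm'eq]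
    group
    simpa using hm')
  rw [inv_inv, map_conj_map_conj] at hmeq
  have hn : m⁻¹ * g ∈ Subgroup.normalizer (K : Set H) := mem_normalizer_of_map_conj_eq K _ hmeq
  have hgM : g ∈ M := by
    have := ha hn
    have : m * (m⁻¹ * g) ∈ M := M.mul_mem hmM this
    simpa using this
  refine ⟨hgM, ?_⟩
  apply le_antisymm
  · intro x hx
    obtain ⟨y, hy, rfl⟩ := hx
    simp only [MulEquiv.coe_toMonoidHom, MulAut.conj_apply]
    exact M.mul_mem (M.mul_mem (M.inv_mem hgM) hy) (by simpa using hgM)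
  · intro y hy
    refine ⟨g * y * g⁻¹, M.mul_mem (M.mul_mem hgM hy) (M.inv_mem hgM), ?_⟩
    simp [MulAut.conj_apply, mul_assoc]
end
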